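/- Grigorchuk's group G is not virtually solvable: G has no solvable subgroup of finite index. -/

import Mathlib

/-- The Grigorchuk generator `a`: flips the first bit of a nonempty binary word. -/
def grigA : List Bool → List Bool
  | [] => []
  | false :: w => true :: w
  | true :: w => false :: w

mutual
  /-- The Grigorchuk generator `b`. -/
  def grigB : List Bool → List Bool
    | [] => []
    | false :: w => false :: grigA w
    | true :: w => true :: grigC w
  /-- The Grigorchuk generator `c`. -/
  def grigC : List Bool → List Bool
    | [] => []
    | false :: w => false :: grigA w
    | true :: w => true :: grigD w
  /-- The Grigorchuk generator `d`. -/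
  def grigD : List Bool → List Bool
    | [] => []
    | false :: w => false :: w
    | true :: w => true :: grigB w
end

theorem grigA_involutive : Function.Involutive grigA := by
  intro w
  match w with
  | [] => rfl
  | false :: w => rfl
  | true :: w => rfl

theorem grigBCD_involutive : ∀ w : List Bool,
    grigB (grigB w) = w ∧ grigC (grigC w) = w ∧ grigD (grigD w) = w
  | [] => ⟨rfl, rfl, rfl⟩
  | false :: w => by
      simp [grigB, grigC, grigD, grigA_involutive w]
  | true :: w => by
      obtain ⟨hb, hc, hd⟩ := grigBCD_involutive w
      simp [grigB, grigC, grigD, hb, hc, hd]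

theorem grigB_involutive : Function.Involutive grigB :=
  fun w => (grigBCD_involutive w).1

theorem grigC_involutive : Function.Involutive grigC :=
  fun w => (grigBCD_involutive w).2.1

theorem grigD_involutive : Function.Involutive grigD :=
  fun w => (grigBCD_involutive w).2.2

/-- The Grigorchuk generator `a` as a permutation of the set of binary words. -/
def grigPermA : Equiv.Perm (List Bool) := grigA_involutive.toPerm grigA

/-- The Grigorchuk generator `b` as a permutation of the set of binary words. -/
def grigPermB : Equiv.Perm (List Bool) := grigB_involutive.toPerm grigB

/-- The Grigorchuk generator `c` as a permutation of the set of binary words. -/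
def grigPermC : Equiv.Perm (List Bool) := grigC_involutive.toPerm grigC

/-- The Grigorchuk generator `d` as a permutation of the set of binary words. -/
def grigPermD : Equiv.Perm (List Bool) := grigD_involutive.toPerm grigD

/-- Grigorchuk's group: the subgroup of the permutation group of the set of binary
words generated by the four permutations `a, b, c, d`. -/
def grigorchukGroup : Subgroup (Equiv.Perm (List Bool)) :=
  Subgroup.closure {grigPermA, grigPermB, grigPermC, grigPermD}

-- auxiliary development
inductive GLtr | A | B | C | D
deriving DecidableEq

open GLtr

def evalL : GLtr → Equiv.Perm (List Bool)
  | A => grigPermA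
  | B => grigPermB
  | C => grigPermC
  | D => grigPermD

def evalW (w : List GLtr) : Equiv.Perm (List Bool) := (w.map evalL).prod

@[simp] lemma evalW_nil : evalW [] = 1 := rfl
@[simp] lemma evalW_cons (x : GLtr) (w : List GLtr) :
    evalW (x :: w) = evalL x * evalW w := by
  simp [evalW]
@[simp] lemma evalW_append (u v : List GLtr) :
    evalW (u ++ v) = evalW u * evalW v := by
  simp [evalW]

@[simp] lemma permA_apply (v : List Bool) : grigPermA v = grigA v := rfl
@[simp] lemma permB_apply (v : List Bool) : grigPermB v = grigB v := rfl
@[simp] lemma permC_apply (v : List Bool) : grigPermC v = grigC v := rfl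
@[simp] lemma permD_apply (v : List Bool) : grigPermD v = grigD v := rfl

lemma grig_rel : ∀ v : List Bool,
    grigB (grigC v) = grigD v ∧ grigC (grigD v) = grigB v ∧ grigD (grigB v) = grigC v ∧
    grigC (grigB v) = grigD v ∧ grigD (grigC v) = grigB v ∧ grigB (grigD v) = grigC v
  | [] => by simp [grigB, grigC, grigD]
  | false :: w => by
      simp [grigB, grigC, grigD, grigA_involutive w]
  | true :: w => by
      obtain ⟨h1, h2, h3, h4, h5, h6⟩ := grig_rel w
      simp [grigB, grigC, grigD, h1, h2, h3, h4, h5, h6]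

lemma evalL_mul_self (x : GLtr) : evalL x * evalL x = 1 := by
  apply Equiv.ext
  intro v
  cases x <;>
    simp [evalL, grigA_involutive v, grigB_involutive v, grigC_involutive v, grigD_involutive v]

lemma evalL_inv (x : GLtr) : (evalL x)⁻¹ = evalL x :=
  inv_eq_of_mul_eq_one_right (evalL_mul_self x)

def isA : GLtr → Bool
  | A => true
  | _ => false

/-- the product of two distinct letters among B, C, D (junk otherwise) -/
def mul3 : GLtr → GLtr → GLtr
  | B, C => D
  | C, B => D
  | B, D => C
  | D, B => C
  | C, D => B
  | D, C => B
  | x, _ => x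

lemma evalL_mul3 {x y : GLtr} (hx : x ≠ A) (hy : y ≠ A) (hxy : x ≠ y) :
    evalL x * evalL y = evalL (mul3 x y) := by
  cases x <;> cases y <;> simp_all <;>
    · apply Equiv.ext
      intro v
      obtain ⟨h1, h2, h3, h4, h5, h6⟩ := grig_rel v
      simp [evalL, mul3, h1, h2, h3, h4, h5, h6]

def par : List GLtr → Bool
  | [] => false
  | x :: w => Bool.xor (isA x) (par w)

def sect : List GLtr → Bool → List GLtr
  | [], _ => []
  | A :: w, i => sect w i
  | B :: w, i => (if Bool.xor (par w) i then C else A) :: sect w i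
  | C :: w, i => (if Bool.xor (par w) i then D else A) :: sect w i
  | D :: w, i => if Bool.xor (par w) i then B :: sect w i else sect w i

@[simp] lemma evalW_apply_nil : ∀ w : List GLtr, evalW w [] = []
  | [] => rfl
  | x :: w => by
      rw [evalW_cons, Equiv.Perm.mul_apply, evalW_apply_nil w]
      cases x <;> rfl

lemma evalW_apply_cons : ∀ (w : List GLtr) (i : Bool) (v : List Bool),
    evalW w (i :: v) = (Bool.xor (par w) i) :: evalW (sect w i) v
  | [], i, v => by simp [par, sect]
  | x :: w, i, v => by
      rw [evalW_cons, Equiv.Perm.mul_apply, evalW_apply_cons w i v]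
      cases x <;> cases hj : Bool.xor (par w) i <;>
        simp_all [evalL, par, sect, isA, grigA, grigB, grigC, grigD, Bool.xor] <;>
        cases hp : par w <;> simp_all

@[simp] lemma par_append : ∀ u v : List GLtr, par (u ++ v) = Bool.xor (par u) (par v)
  | [], v => by simp [par]
  | x :: u, v => by
      simp [par, par_append u v, Bool.xor_assoc]

lemma sect_append : ∀ (u v : List GLtr) (i : Bool),
    sect (u ++ v) i = sect u (Bool.xor (par v) i) ++ sect v i
  | [], v, i => by simp [sect]
  | x :: u, v, i => by
      cases x <;> cases hu : par u <;> cases hv : par v <;> cases i <;>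
        simp_all [sect, sect_append u v, par_append]

def muL : GLtr → ℕ
  | A => 6
  | B => 6
  | C => 5
  | D => 4

def mu (w : List GLtr) : ℕ := (w.map muL).sum

def hL : GLtr → ℕ
  | A => 0
  | B => 11
  | C => 10
  | D => 6

def hsum (w : List GLtr) : ℕ := (w.map hL).sum

@[simp] lemma mu_nil : mu [] = 0 := rfl
@[simp] lemma mu_cons (x w) : mu (x :: w) = muL x + mu w := by simp [mu]
@[simp] lemma mu_append (u v) : mu (u ++ v) = mu u + mu v := by simp [mu]
@[simp] lemma hsum_nil : hsum [] = 0 := rfl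
@[simp] lemma hsum_cons (x w) : hsum (x :: w) = hL x + hsum w := by simp [hsum]

lemma sect_mu : ∀ w : List GLtr, mu (sect w false) + mu (sect w true) = hsum w
  | [] => rfl
  | x :: w => by
      have ih := sect_mu w
      cases x <;> cases hp : par w <;>
        simp_all [sect, hp, muL, hL] <;> omega

lemma mu_sect_le (w : List GLtr) (i : Bool) : mu (sect w i) ≤ hsum w := by
  have := sect_mu w
  cases i <;> omega

/-- counting a's and non-a's -/
def nA (w : List GLtr) : ℕ := w.countP (fun x => isA x)
def nU (w : List GLtr) : ℕ := w.countP (fun x => !isA x)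

@[simp] lemma nA_cons (x w) : nA (x :: w) = nA w + (if isA x then 1 else 0) := by
  simp [nA, List.countP_cons]
@[simp] lemma nU_cons (x w) : nU (x :: w) = nU w + (if isA x then 0 else 1) := by
  simp [nU, List.countP_cons]
  cases isA x <;> simp

lemma hsum_lt_mu_aux : ∀ w : List GLtr, hsum w + 6 * nA w ≤ mu w + 5 * nU w
  | [] => le_refl 0
  | x :: w => by
      have ih := hsum_lt_mu_aux w
      cases x <;> simp [hL, muL, isA] <;> omega

lemma hsum_lt_mu (w : List GLtr) (h : nA w = nU w) (h1 : 1 ≤ nU w) : hsum w < mu w := by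
  have := hsum_lt_mu_aux w
  omega

/-- alternation structure count -/
lemma alt_count : ∀ (w : List GLtr) (x y : GLtr),
    List.Chain' (fun p q => isA p ≠ isA q) w → w.head? = some x → w.getLast? = some y →
    2 * nA w + 1 = w.length + (if isA x then 1 else 0) + (if isA y then 1 else 0)
  | [], x, y => by simp
  | [z], x, y => by
      intro _ hx hy
      simp at hx hy
      subst hx; subst hy
      simp only [nA, List.countP_cons, List.countP_nil, List.length_cons, List.length_nil]
      cases isA z <;> simp
  | z :: z' :: w, x, y => by
      intro hch hx hy
      simp only [List.head?_cons, Option.some.injEq] at hx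
      subst hx
      change List.IsChain _ (_ :: _ :: _) at hch
      rw [List.isChain_cons_cons] at hch
      have hlast : (z' :: w).getLast? = some y := by
        rw [← hy, List.getLast?_cons_cons]
      have ih := alt_count (z' :: w) z' y hch.2 rfl hlast
      have hne := hch.1
      simp only [nA_cons, List.length_cons] at ih ⊢
      cases hxa : isA z <;> cases hz : isA z' <;> simp_all <;> omega

lemma finOrder_of_sections (w : List GLtr) (hp : par w = false)
    (h0 : IsOfFinOrder (evalW (sect w false))) (h1 : IsOfFinOrder (evalW (sect w true))) :
    IsOfFinOrder (evalW w) := by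
  obtain ⟨n0, hn0, he0⟩ := isOfFinOrder_iff_pow_eq_one.mp h0
  obtain ⟨n1, hn1, he1⟩ := isOfFinOrder_iff_pow_eq_one.mp h1
  have key : ∀ (m : ℕ) (v : List Bool), (evalW w ^ m) v =
      match v with
      | [] => []
      | i :: u => i :: ((evalW (sect w i)) ^ m) u := by
    intro m
    induction m with
    | zero => intro v; cases v <;> simp
    | succ m ih =>
      intro v
      rw [pow_succ, Equiv.Perm.mul_apply]
      cases v with
      | nil => rw [show (evalW w) [] = [] from evalW_apply_nil w, ih []]
      | cons i u =>
          rw [evalW_apply_cons, hp]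
          simp only [Bool.xor, Bool.false_xor]
          rw [ih (i :: evalW (sect w i) u)]
          simp only
          rw [pow_succ, Equiv.Perm.mul_apply]
  rw [isOfFinOrder_iff_pow_eq_one]
  refine ⟨n0 * n1, Nat.mul_pos hn0 hn1, ?_⟩
  apply Equiv.ext
  intro v
  rw [key (n0 * n1) v]
  cases v with
  | nil => simp
  | cons i u =>
      cases i
      · show false :: (evalW (sect w false) ^ (n0 * n1)) u = (1 : Equiv.Perm (List Bool)) (false :: u)
        rw [pow_mul, he0, one_pow]; simp
      · show true :: (evalW (sect w true) ^ (n0 * n1)) u = (1 : Equiv.Perm (List Bool)) (true :: u)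
        rw [mul_comm n0 n1, pow_mul, he1, one_pow]; simp

/-- normalization -/
def push (x : GLtr) : List GLtr → List GLtr
  | [] => [x]
  | y :: v => if isA x = isA y then (if x = y then v else mul3 x y :: v) else x :: y :: v

def normW : List GLtr → List GLtr
  | [] => []
  | x :: w => push x (normW w)

lemma push_eval (x : GLtr) (l : List GLtr) : evalW (push x l) = evalL x * evalW l := by
  cases l with
  | nil => simp [push]
  | cons y v =>
      by_cases h1 : isA x = isA y
      · by_cases h2 : x = y
        · subst h2
          simp [push, h1, ← mul_assoc, evalL_mul_self]
        · have hx : x ≠ A := by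
            intro h; subst h
            cases y <;> simp_all [isA]
          have hy : y ≠ A := by
            intro h; subst h
            cases x <;> simp_all [isA]
          simp [push, h1, h2, ← mul_assoc, evalL_mul3 hx hy h2]
      · simp [push, h1]

lemma push_mu (x : GLtr) (l : List GLtr) : mu (push x l) ≤ muL x + mu l := by
  cases l with
  | nil => simp [push]
  | cons y v =>
      by_cases h1 : isA x = isA y
      · by_cases h2 : x = y
        · subst h2; simp [push, h1]
          cases x <;> simp [muL] <;> omega
        · simp [push, h1, h2]
          cases x <;> cases y <;> simp [mul3, muL] <;> omega
      · simp [push, h1]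

lemma push_chain (x : GLtr) (l : List GLtr) (h : List.Chain' (fun p q => isA p ≠ isA q) l) :
    List.Chain' (fun p q => isA p ≠ isA q) (push x l) := by
  cases l with
  | nil => simp [push, List.Chain']
  | cons y v =>
      by_cases h1 : isA x = isA y
      · by_cases h2 : x = y
        · subst h2; simpa [push, h1, List.Chain'] using h.tail
        · simp only [push, h1, if_true, h2, if_false]
          show List.IsChain _ _
          rw [List.isChain_cons]
          refine ⟨?_, h.tail⟩
          intro z hz
          have hyz : isA y ≠ isA z := by
            change List.IsChain _ (_ :: _) at h
            rw [List.isChain_cons] at h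
            exact h.1 z hz
          have : isA (mul3 x y) = isA y := by
            cases x <;> cases y <;> simp_all [isA, mul3]
          rw [this]; exact hyz
      · simp only [push, h1, if_false]
        show List.IsChain _ _
        rw [List.isChain_cons]
        exact ⟨fun z hz => by simp at hz; subst hz; exact h1, h⟩

lemma normW_eval (w : List GLtr) : evalW (normW w) = evalW w := by
  induction w with
  | nil => rfl
  | cons x w ih => rw [normW, push_eval, ih, evalW_cons]

lemma normW_mu (w : List GLtr) : mu (normW w) ≤ mu w := by
  induction w with
  | nil => simp [normW]
  | cons x w ih =>
      calc mu (normW (x :: w)) ≤ muL x + mu (normW w) := push_mu x (normW w)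
      _ ≤ muL x + mu w := by omega
      _ = mu (x :: w) := (mu_cons x w).symm

lemma normW_chain (w : List GLtr) : List.Chain' (fun p q => isA p ≠ isA q) (normW w) := by
  induction w with
  | nil => simp [normW, List.Chain']
  | cons x w ih => exact push_chain x (normW w) ih

lemma nA_add_nU : ∀ w : List GLtr, nA w + nU w = w.length
  | [] => rfl
  | x :: w => by
      have := nA_add_nU w
      cases hx : isA x <;> simp [hx, this] <;> omega

lemma conj_pow_eq {G : Type*} [Group G] (h g : G) : ∀ n : ℕ, (h * g * h⁻¹) ^ n = h * g ^ n * h⁻¹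
  | 0 => by simp
  | n + 1 => by rw [pow_succ, conj_pow_eq h g n, pow_succ]; group

lemma conj_finOrder {G : Type*} [Group G] {g h : G} (hf : IsOfFinOrder (h * g * h⁻¹)) :
    IsOfFinOrder g := by
  obtain ⟨n, hn, he⟩ := isOfFinOrder_iff_pow_eq_one.mp hf
  rw [conj_pow_eq] at he
  rw [isOfFinOrder_iff_pow_eq_one]
  refine ⟨n, hn, ?_⟩
  have : g ^ n = h⁻¹ * (h * g ^ n * h⁻¹) * h := by group
  rw [this, he]; group

lemma torsion_step (N : ℕ) (ih : ∀ u : List GLtr, mu u < N → IsOfFinOrder (evalW u)) :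
    ∀ w' : List GLtr, List.Chain' (fun p q => isA p ≠ isA q) w' → mu w' ≤ N →
    IsOfFinOrder (evalW w') := by
  intro w' hch hmu
  match w' with
  | [] => simpa using isOfFinOrder_one
  | [x] =>
      rw [isOfFinOrder_iff_pow_eq_one]
      refine ⟨2, by norm_num, ?_⟩
      rw [pow_two]
      simp [evalL_mul_self]
  | x :: (t : List GLtr) =>
    rcases List.eq_nil_or_concat t with rfl | ⟨v, y, rfl⟩
    · rw [isOfFinOrder_iff_pow_eq_one]
      refine ⟨2, by norm_num, ?_⟩
      rw [pow_two]
      simp [evalL_mul_self]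
    · rw [List.concat_eq_append] at *
      by_cases hxy : isA x = isA y
      · -- conjugate and shorten
        have he : evalL y * evalW (x :: (v ++ [y])) * (evalL y)⁻¹ = evalW (push y (x :: v)) := by
          rw [push_eval, evalL_inv]
          simp only [evalW_cons, evalW_append, evalW_nil, mul_one, mul_assoc, evalL_mul_self]
        have hpm : mu (push y (x :: v)) < mu (x :: (v ++ [y])) := by
          by_cases h2 : y = x
          · subst h2
            simp only [push, hxy.symm, if_true, if_pos rfl]
            simp only [mu_cons, mu_append]
            cases y <;> simp [muL] <;> omega
          · have hx : x ≠ A := by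
              intro h; subst h; cases y <;> simp_all [isA]
            have hy : y ≠ A := by
              intro h; subst h; cases x <;> simp_all [isA]
            simp only [push, hxy.symm, if_true, if_neg h2]
            simp only [mu_cons, mu_append]
            cases x <;> cases y <;> simp_all [mul3, muL] <;> omega
        have hfo : IsOfFinOrder (evalW (push y (x :: v))) := ih _ (by omega)
        exact conj_finOrder (g := evalW (x :: (v ++ [y]))) (h := evalL y) (by rw [he]; exact hfo)
      · -- alternating word with distinct end types
        have hy' : (x :: (v ++ [y])).getLast? = some y := by
          have : x :: (v ++ [y]) = (x :: v) ++ [y] := by simp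
          rw [this, List.getLast?_concat]
        have hcount := alt_count _ x y hch rfl hy'
        have hlen := nA_add_nU (x :: (v ++ [y]))
        have hnn : nA (x :: (v ++ [y])) = nU (x :: (v ++ [y])) ∧ 1 ≤ nU (x :: (v ++ [y])) := by
          have hl : (x :: (v ++ [y])).length = v.length + 2 := by simp
          cases hxa : isA x <;> cases hya : isA y <;>
            simp [hxa, hya] at hcount hxy hlen ⊢ <;> omega
        have hlt : hsum (x :: (v ++ [y])) < mu (x :: (v ++ [y])) := hsum_lt_mu _ hnn.1 hnn.2
        cases hpar : par (x :: (v ++ [y]))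
        · apply finOrder_of_sections _ hpar
          · exact ih _ (by have := mu_sect_le (x :: (v ++ [y])) false; omega)
          · exact ih _ (by have := mu_sect_le (x :: (v ++ [y])) true; omega)
        · set W := x :: (v ++ [y]) with hW
          have hpp : par (W ++ W) = false := by simp [hpar]
          have hsect : ∀ i, mu (sect (W ++ W) i) < N := by
            intro i
            rw [sect_append, hpar]
            have := sect_mu W
            cases i <;> simp only [mu_append, Bool.xor] <;> simp <;> omega
          have h2 : IsOfFinOrder (evalW (W ++ W)) :=
            finOrder_of_sections _ hpp (ih _ (hsect false)) (ih _ (hsect true))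
          rw [evalW_append, ← pow_two] at h2
          exact h2.of_pow two_ne_zero

theorem evalW_isOfFinOrder (w : List GLtr) : IsOfFinOrder (evalW w) := by
  suffices H : ∀ (N : ℕ) (u : List GLtr), mu u < N → IsOfFinOrder (evalW u) from
    H (mu w + 1) w (Nat.lt_succ_self _)
  intro N
  induction N with
  | zero => exact fun u h => absurd h (Nat.not_lt_zero _)
  | succ N ih =>
      intro u hu
      rw [← normW_eval u]
      exact torsion_step N ih (normW u) (normW_chain u)
        (le_trans (normW_mu u) (Nat.lt_succ_iff.mp hu))

lemma evalL_mem (x : GLtr) : evalL x ∈ grigorchukGroup := by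
  apply Subgroup.subset_closure
  cases x <;> simp [evalL]

lemma evalW_mem (w : List GLtr) : evalW w ∈ grigorchukGroup :=
  Subgroup.list_prod_mem _ (fun x hx => by
    obtain ⟨l, _, rfl⟩ := List.mem_map.mp hx
    exact evalL_mem l)

lemma evalW_reverse (w : List GLtr) : evalW (w.reverse) = (evalW w)⁻¹ := by
  induction w with
  | nil => simp
  | cons x w ih =>
      rw [List.reverse_cons, evalW_append, ih, evalW_cons]
      simp [mul_inv_rev, evalL_inv]

lemma exists_word {g : Equiv.Perm (List Bool)} (hg : g ∈ grigorchukGroup) :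
    ∃ w : List GLtr, g = evalW w := by
  induction hg using Subgroup.closure_induction with
  | mem z hz =>
      rcases hz with rfl | rfl | rfl | rfl
      exacts [⟨[A], by simp [evalL]⟩, ⟨[B], by simp [evalL]⟩,
        ⟨[C], by simp [evalL]⟩, ⟨[D], by simp [evalL]⟩]
  | one => exact ⟨[], rfl⟩
  | mul a b _ _ ha hb =>
      obtain ⟨wa, rfl⟩ := ha
      obtain ⟨wb, rfl⟩ := hb
      exact ⟨wa ++ wb, by simp⟩
  | inv a _ ha =>
      obtain ⟨wa, rfl⟩ := ha
      exact ⟨wa.reverse, (evalW_reverse wa).symm⟩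

lemma finOrder_subtype {G : Type*} [Group G] (H : Subgroup G) (g : H)
    (h : IsOfFinOrder (g : G)) : IsOfFinOrder g := by
  obtain ⟨n, hn, he⟩ := isOfFinOrder_iff_pow_eq_one.mp h
  exact isOfFinOrder_iff_pow_eq_one.mpr ⟨n, hn, by
    apply Subtype.ext
    rw [Subgroup.coe_pow, he, Subgroup.coe_one]⟩

lemma grig_torsion (g : grigorchukGroup) : IsOfFinOrder g := by
  obtain ⟨w, hw⟩ := exists_word g.2
  exact finOrder_subtype _ g (hw ▸ evalW_isOfFinOrder w)

/-! Lifting : transitivity on levels -/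

def liftL : GLtr → List GLtr
  | A => [B]
  | B => [A, D, A]
  | C => [A, B, A]
  | D => [A, C, A]

lemma par_liftL (x : GLtr) : par (liftL x) = false := by
  cases x <;> rfl

lemma sect_liftL (x : GLtr) : sect (liftL x) false = [x] := by
  cases x <;> rfl

def liftW : List GLtr → List GLtr
  | [] => []
  | x :: w => liftL x ++ liftW w

lemma par_liftW : ∀ w, par (liftW w) = false
  | [] => rfl
  | x :: w => by
      simp [liftW, par_append, par_liftL, par_liftW w]

lemma sect_liftW : ∀ w, sect (liftW w) false = w
  | [] => rfl
  | x :: w => by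
      rw [liftW, sect_append, par_liftW w]
      simp [sect_liftL, sect_liftW w]

lemma evalW_liftW (w : List GLtr) (v : List Bool) :
    evalW (liftW w) (false :: v) = false :: evalW w v := by
  rw [evalW_apply_cons, par_liftW, sect_liftW]
  rfl

lemma surj_level : ∀ v : List Bool, ∃ u : List GLtr,
    evalW u (List.replicate v.length false) = v
  | [] => ⟨[], rfl⟩
  | x :: v => by
      obtain ⟨u, hu⟩ := surj_level v
      have hrep : List.replicate (x :: v).length false = false :: List.replicate v.length false := by
        simp [List.replicate_succ]
      cases x
      · refine ⟨liftW u, ?_⟩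
        rw [hrep, evalW_liftW, hu]
      · refine ⟨A :: liftW u, ?_⟩
        rw [hrep, evalW_cons, Equiv.Perm.mul_apply, evalW_liftW, hu]
        rfl

lemma grig_infinite : Infinite grigorchukGroup := by
  rw [← not_finite_iff_infinite]
  intro hfin
  set n := Nat.card grigorchukGroup with hn
  have key : ∀ v : Fin n → Bool, ∃ g : grigorchukGroup,
      (g : Equiv.Perm (List Bool)) (List.replicate n false) = List.ofFn v := by
    intro v
    obtain ⟨u, hu⟩ := surj_level (List.ofFn v)
    refine ⟨⟨evalW u, evalW_mem u⟩, ?_⟩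
    simpa using hu
  choose f hf using key
  have hinj : Function.Injective f := by
    intro v1 v2 h
    have : List.ofFn v1 = List.ofFn v2 := by rw [← hf v1, ← hf v2, h]
    exact List.ofFn_injective this
  have hle : Nat.card (Fin n → Bool) ≤ n := hn ▸ Nat.card_le_card_of_injective f hinj
  have hcard : Nat.card (Fin n → Bool) = 2 ^ n := by
    simp [Nat.card_eq_fintype_card]
  rw [hcard] at hle
  exact absurd hle (Nat.not_le.mpr Nat.lt_two_pow_self)

lemma finite_of_fg_torsion_derived :
    ∀ (n : ℕ) (H : Type) [Group H], Group.FG H → (∀ g : H, IsOfFinOrder g) →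
      derivedSeries H n = ⊥ → Finite H := by
  intro n
  induction n with
  | zero =>
      intro H _ _ _ hds
      rw [derivedSeries_zero] at hds
      have h1 : ∀ x : H, x = 1 := fun x =>
        Subgroup.mem_bot.mp (hds ▸ Subgroup.mem_top x)
      exact Finite.of_surjective (fun _ : Unit => (1 : H)) (fun x => ⟨(), (h1 x).symm⟩)
  | succ n ih =>
      intro H _ hfg htor hds
      haveI := hfg
      -- the abelianization is finite
      have hsurj : Function.Surjective (Abelianization.of (G := H)) := fun q =>
        QuotientGroup.mk'_surjective (commutator H) q
      haveI hQfg : Group.FG (Abelianization H) := Group.fg_of_surjective hsurj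
      have htorQ : Monoid.IsTorsion (Abelianization H) := by
        intro q
        obtain ⟨x, rfl⟩ := hsurj q
        exact Abelianization.of.isOfFinOrder (htor x)
      have hQfin : Finite (Abelianization H) := CommGroup.finite_of_fg_torsion _ htorQ
      have hQfin' : Finite (H ⧸ commutator H) := hQfin
      haveI : (commutator H).FiniteIndex := Subgroup.finiteIndex_of_finite_quotient
      haveI hHfg : Group.FG (commutator H) := Subgroup.fg_of_index_ne_zero _
      have htor' : ∀ g : (commutator H), IsOfFinOrder g :=
        fun g => finOrder_subtype _ g (htor g)
      have hmap : ∀ k : ℕ, (derivedSeries (commutator H) k).map (commutator H).subtype ≤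
          derivedSeries H (k + 1) := by
        intro k
        induction k with
        | zero =>
            rw [derivedSeries_zero, derivedSeries_one]
            exact Subgroup.map_subtype_le _
        | succ k ihk =>
            rw [derivedSeries_succ, Subgroup.map_commutator, derivedSeries_succ]
            exact Subgroup.commutator_mono ihk ihk
      have hds' : derivedSeries (commutator H) n = ⊥ := by
        have := hmap n
        rw [hds] at this
        have hle : (derivedSeries (commutator H) n).map (commutator H).subtype = ⊥ :=
          le_bot_iff.mp this
        exact (Subgroup.map_eq_bot_iff_of_injective _
          (commutator H).subtype_injective).mp hle
      have hfin' : Finite (commutator H) := ih (commutator H) hHfg htor' hds'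
      exact Finite.of_equiv _ (Subgroup.groupEquivQuotientProdSubgroup (s := commutator H)).symm


/-- Grigorchuk's group is not virtually solvable: it has no solvable subgroup of
finite index. -/
theorem grigorchukGroup_not_virtually_solvable :
    ¬ ∃ K : Subgroup grigorchukGroup, K.FiniteIndex ∧ IsSolvable K := by
  rintro ⟨K, hKfin, hKsolv⟩
  haveI : Finite ({grigPermA, grigPermB, grigPermC, grigPermD} : Set (Equiv.Perm (List Bool))) :=
    (((Set.finite_singleton grigPermD).insert grigPermC).insert grigPermB).insert grigPermA
      |>.to_subtype
  haveI : Group.FG grigorchukGroup := by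
    show Group.FG (Subgroup.closure {grigPermA, grigPermB, grigPermC, grigPermD})
    exact Group.closure_finite_fg _
  haveI := hKfin
  haveI hKfg : Group.FG K := Subgroup.fg_of_index_ne_zero _
  have htorK : ∀ g : K, IsOfFinOrder g :=
    fun g => finOrder_subtype _ g (grig_torsion g)
  obtain ⟨n, hn⟩ := hKsolv.solvable
  have hKfinite : Finite K := finite_of_fg_torsion_derived n K hKfg htorK hn
  have : Finite grigorchukGroup :=
    Finite.of_equiv _ (Subgroup.groupEquivQuotientProdSubgroup (s := K)).symm
  exact absurd this (not_finite_iff_infinite.mpr grig_infinite)
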